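/- Let P and Q be n×n complex matrices such that P𝕀Q = 𝕀, where 𝕀 is the order m ≥ 2, dimension n unit tensor. Then both P and Q are invertible. -/

import Mathlib

open scoped BigOperators

noncomputable section

/-- An "order (1 + |α|)" tensor of dimension `|I|` over `R`: entries indexed by a
head index in `I` and a tail of indices `α → I`. -/
abbrev Tensor (R I α : Type) : Type := I → (α → I) → R

/-- The general tensor product: `(A*B)_{i α₁ ⋯ α_m} = ∑ a_{i i₂ ⋯} ∏ b_{i_j α_j}`. -/
def tmul {R I α β : Type} [CommSemiring R] [Fintype I] [DecidableEq α] [Fintype α]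
    (A : Tensor R I α) (B : Tensor R I β) : Tensor R I (α × β) :=
  fun i f => ∑ t : α → I, A i t * ∏ j : α, B (t j) (fun b => f (j, b))

/-- The general tensor product of a tensor with a vector (an order-1 tensor). -/
def tapp {R I α : Type} [CommSemiring R] [Fintype I] [DecidableEq α] [Fintype α]
    (A : Tensor R I α) (x : I → R) : I → R :=
  fun i => ∑ t : α → I, A i t * ∏ j : α, x (t j)

/-- The general tensor product `P * A` where `P` is a matrix (an order-2 tensor). -/
def matMulT {R I α : Type} [CommSemiring R] [Fintype I]
    (P : Matrix I I R) (A : Tensor R I α) : Tensor R I α :=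
  fun i f => ∑ j : I, P i j * A j f

/-- The general tensor product `A * Q` where `Q` is a matrix (an order-2 tensor). -/
def tMulMat {R I α : Type} [CommSemiring R] [Fintype I] [DecidableEq α] [Fintype α]
    (A : Tensor R I α) (Q : Matrix I I R) : Tensor R I α :=
  fun i f => ∑ t : α → I, A i t * ∏ j : α, Q (t j) (f j)

/-- The unit tensor `𝕀`: entries `1` exactly on the diagonal. -/
def unitT (R I α : Type) [CommSemiring R] [DecidableEq I] [Fintype α] [DecidableEq α] :
    Tensor R I α :=
  fun i f => if ∀ j, f j = i then 1 else 0

/-- The direct product of two tensors of the same order. -/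
def dprod {R I J α : Type} [CommSemiring R]
    (A : Tensor R I α) (B : Tensor R J α) : Tensor R (I × J) α :=
  fun p f => A p.1 (fun j => (f j).1) * B p.2 (fun j => (f j).2)

end

lemma unit_tMulMat {n m : ℕ} (Q : Matrix (Fin n) (Fin n) ℂ) (j : Fin n) (f : Fin m → Fin n) :
    tMulMat (unitT ℂ (Fin n) (Fin m)) Q j f = ∏ l, Q j (f l) := by
  rw [tMulMat]
  rw [Finset.sum_eq_single (fun _ => j)]
  · simp [unitT]
  · intro t _ ht
    have : ¬ ∀ l, t l = j := fun hc => ht (funext hc)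
    simp [unitT, this]
  · simp

/-- if `P 𝕀 Q = 𝕀` for the unit tensor of order `m + 1 ≥ 2`, then both
`P` and `Q` are invertible. -/
theorem invertible_of_PIQ_eq_I (n m : ℕ) (hm : 1 ≤ m)
    (P Q : Matrix (Fin n) (Fin n) ℂ)
    (h : matMulT P (tMulMat (unitT ℂ (Fin n) (Fin m)) Q) = unitT ℂ (Fin n) (Fin m)) :
    IsUnit P ∧ IsUnit Q := by
  have hne : Nonempty (Fin m) := ⟨⟨0, hm⟩⟩
  have h' : ∀ (i : Fin n) (f : Fin m → Fin n),
      ∑ j, P i j * ∏ l, Q j (f l) = unitT ℂ (Fin n) (Fin m) i f := by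
    intro i f
    have := congrFun (congrFun h i) f
    simp only [matMulT, unit_tMulMat] at this
    exact this
  -- P is invertible: P * (entrywise m-th power of Q) = 1
  have hP : P * (Q.map (· ^ m)) = 1 := by
    ext i k
    have := h' i (fun _ => k)
    simp only [Finset.prod_const, Finset.card_univ, Fintype.card_fin] at this
    simp only [Matrix.mul_apply, Matrix.map_apply, Matrix.one_apply]
    rw [this]
    simp [unitT, eq_comm]
  have hPunit : IsUnit P := by
    have : IsUnit P.det := IsUnit.of_mul_eq_one _ (by rw [← Matrix.det_mul, hP, Matrix.det_one])
    exact (Matrix.isUnit_iff_isUnit_det P).2 this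
  refine ⟨hPunit, ?_⟩
  -- Q is invertible: mulVec is injective
  have key : ∀ (x : Fin n → ℂ) (i : Fin n),
      ∑ j, P i j * (Q.mulVec x j) ^ m = x i ^ m := by
    intro x i
    calc ∑ j, P i j * (Q.mulVec x j) ^ m
        = ∑ j, P i j * ∑ f : Fin m → Fin n, ∏ l, (Q j (f l) * x (f l)) := by
          simp only [Matrix.mulVec, dotProduct, Fintype.sum_pow]
      _ = ∑ f : Fin m → Fin n, (∑ j, P i j * ∏ l, Q j (f l)) * ∏ l, x (f l) := by
          simp_rw [Finset.prod_mul_distrib, Finset.mul_sum, Finset.sum_mul]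
          rw [Finset.sum_comm]
          exact Finset.sum_congr rfl fun j _ => Finset.sum_congr rfl fun f _ => (mul_assoc _ _ _).symm
      _ = ∑ f : Fin m → Fin n, unitT ℂ (Fin n) (Fin m) i f * ∏ l, x (f l) := by
          simp_rw [h']
      _ = x i ^ m := by
          rw [Finset.sum_eq_single (fun _ => i)]
          · simp [unitT]
          · intro t _ ht
            have : ¬ ∀ l, t l = i := fun hc => ht (funext hc)
            simp [unitT, this]
          · simp
  have hinj : Function.Injective Q.mulVec := by
    intro x y hxy
    have hv : Q.mulVec (x - y) = 0 := by
      rw [Matrix.mulVec_sub, hxy, sub_self]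
    have hz : x - y = 0 := by
      funext i
      have := key (x - y) i
      rw [hv] at this
      simp only [Pi.zero_apply, zero_pow (by omega : m ≠ 0), mul_zero,
        Finset.sum_const_zero] at this
      have h0 : (x - y) i ^ m = 0 := this.symm
      simpa using pow_eq_zero_iff (by omega : m ≠ 0) |>.mp h0
    exact sub_eq_zero.mp hz
  exact Matrix.mulVec_injective_iff_isUnit.mp hinj
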